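/- Let q = sk + r with 1 ≤ r ≤ k-1, and let F be a family of k-subsets of {1,...,n} containing all k-subsets of {1,...,q} and having matching number at most s. For r+1 ≤ l' ≤ k-1, the subfamily F_{l'} = {F ∈ F : |F ∩ [q]| = l'} has matching number at most (k-r-1)/(k-l'). -/
import Mathlib


open Finset

/-- Coordinatewise (shifting) partial order on finite sets of naturals:
`A ≼ B` iff the increasing enumerations satisfy `aₗ ≤ bₗ` for all `l`. -/
def shiftLE (A B : Finset ℕ) : Prop :=
  List.Forall₂ (· ≤ ·) (A.sort (· ≤ ·)) (B.sort (· ≤ ·))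

/-- A family on the ground set `{1,…,n}` is shifted. -/
def IsShifted (n : ℕ) (F : Finset (Finset ℕ)) : Prop :=
  ∀ B ∈ F, ∀ A ⊆ Finset.Icc 1 n, shiftLE A B → A ∈ F

/-- The matching number of `F` is at most `s`. -/
def MatchingLE (F : Finset (Finset ℕ)) (s : ℕ) : Prop :=
  ∀ M ⊆ F, (M : Set (Finset ℕ)).PairwiseDisjoint id → M.card ≤ s

/-- `F` contains `s` pairwise disjoint members. -/
def HasMatching (F : Finset (Finset ℕ)) (s : ℕ) : Prop :=
  ∃ M ⊆ F, (M : Set (Finset ℕ)).PairwiseDisjoint id ∧ M.card = s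

/-- The clique number of `F` (as a `k`-graph on `{1,…,n}`) is at least `q`. -/
def HasClique (n : ℕ) (F : Finset (Finset ℕ)) (k q : ℕ) : Prop :=
  ∃ Q ⊆ Finset.Icc 1 n, Q.card = q ∧ Q.powersetCard k ⊆ F

lemma extract_disjoint (k : ℕ) (hk : 1 ≤ k) : ∀ (t : ℕ) (R : Finset ℕ), t * k ≤ R.card →
    ∃ N : Finset (Finset ℕ), N.card = t ∧ (∀ A ∈ N, A ⊆ R ∧ A.card = k) ∧
      (N : Set (Finset ℕ)).PairwiseDisjoint id := by
  intro t
  induction t with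
  | zero => exact fun R _ => ⟨∅, by simp, by simp, by simp⟩
  | succ t ih =>
    intro R hR
    obtain ⟨S, hSR, hSc⟩ := Finset.exists_subset_card_eq (show k ≤ R.card from le_trans (by nlinarith) hR)
    obtain ⟨N, hNc, hNsub, hNd⟩ := ih (R \ S) (by
      rw [Finset.card_sdiff_of_subset hSR, hSc]
      have : t * k + k ≤ R.card := by rw [← Nat.succ_mul]; exact hR
      omega)
    have hSN : S ∉ N := by
      intro hS
      have hsub := (hNsub S hS).1
      have hne : S.Nonempty := Finset.card_pos.mp (by omega)
      obtain ⟨x, hx⟩ := hne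
      have := hsub hx
      simp [Finset.mem_sdiff] at this
      exact this.2 hx
    refine ⟨insert S N, by rw [Finset.card_insert_of_notMem hSN, hNc], ?_, ?_⟩
    · intro A hA
      rcases Finset.mem_insert.mp hA with h | h
      · exact ⟨h ▸ hSR, h ▸ hSc⟩
      · exact ⟨(hNsub A h).1.trans Finset.sdiff_subset, (hNsub A h).2⟩
    · rw [Finset.coe_insert]
      refine hNd.insert ?_
      intro B hB _
      have hBs := (hNsub B hB).1
      simp only [id]
      rw [Finset.disjoint_left]
      intro x hxS hxB
      have := hBs hxB
      simp [Finset.mem_sdiff] at this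
      exact this.2 hxS

lemma arith_key (k s r q l' m : ℕ) (hq : q = s * k + r) (hr1 : 1 ≤ r) (hrk : r + 1 ≤ k)
    (hl'k : l' + 1 ≤ k) (hms : m ≤ s) (hc : k - r ≤ m * (k - l')) :
    m * l' ≤ q ∧ (s - m + 1) * k ≤ q - m * l' := by
  have e1 : m * k = m * l' + m * (k - l') := by rw [← Nat.mul_add]; congr 1; omega
  have e2 : s * k = m * k + (s - m) * k := by rw [← Nat.add_mul]; congr 1; omega
  have e3 : (s - m + 1) * k = (s - m) * k + k := by rw [Nat.add_mul, one_mul]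
  have h1 : m * l' ≤ q := by
    have : m * l' ≤ m * k := Nat.mul_le_mul_left m (by omega)
    omega
  exact ⟨h1, by omega⟩

lemma stmt6_aux (n k s r q l' : ℕ) (hq : q = s * k + r)
    (hr1 : 1 ≤ r) (hr2 : r ≤ k - 1)
    (F : Finset (Finset ℕ)) (hF : F ⊆ (Finset.Icc 1 n).powersetCard k)
    (hclq : (Finset.Icc 1 q).powersetCard k ⊆ F)
    (hmatch : ∀ M ⊆ F, (M : Set (Finset ℕ)).PairwiseDisjoint id → M.card ≤ s)
    (hl' : r + 1 ≤ l') (hl'k : l' ≤ k - 1) :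
    ∀ M ⊆ F.filter (fun A => (A ∩ Finset.Icc 1 q).card = l'),
      (M : Set (Finset ℕ)).PairwiseDisjoint id →
        M.card * (k - l') ≤ k - r - 1 := by
  intro M hM hdisj
  have hk : r + 1 ≤ k := by omega
  have hl'k' : l' + 1 ≤ k := by omega
  by_contra hcon
  push_neg at hcon
  set m := M.card with hm
  have hc : k - r ≤ m * (k - l') := by omega
  have hMF : M ⊆ F := hM.trans (Finset.filter_subset _ _)
  have hms : m ≤ s := hmatch M hMF hdisj
  -- properties of members
  have hmem : ∀ A ∈ M, (A ∩ Finset.Icc 1 q).card = l' := by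
    intro A hA
    exact (Finset.mem_filter.mp (hM hA)).2
  -- the union of traces
  set U := M.biUnion (fun A => A ∩ Finset.Icc 1 q) with hUdef
  have hUcard : U.card = m * l' := by
    rw [Finset.card_biUnion]
    · rw [Finset.sum_congr rfl hmem, Finset.sum_const, smul_eq_mul]
    · intro A hA B hB hAB
      exact Disjoint.mono (Finset.inter_subset_left) (Finset.inter_subset_left) (hdisj hA hB hAB)
  have hUq : U ⊆ Finset.Icc 1 q := by
    intro x hx
    obtain ⟨A, _, hxA⟩ := Finset.mem_biUnion.mp hx
    exact (Finset.mem_inter.mp hxA).2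
  set R := Finset.Icc 1 q \ U with hRdef
  obtain ⟨h1, h2⟩ := arith_key k s r q l' m hq hr1 hk hl'k' hms hc
  have hRcard : (s - m + 1) * k ≤ R.card := by
    rw [Finset.card_sdiff_of_subset hUq, Nat.card_Icc, hUcard]
    omega
  obtain ⟨N, hNc, hNsub, hNd⟩ := extract_disjoint k (by omega) (s - m + 1) R hRcard
  -- each N member disjoint from each M member
  have hcross : ∀ A ∈ M, ∀ B ∈ N, Disjoint A B := by
    intro A hA B hB
    rw [Finset.disjoint_left]
    intro x hxA hxB
    have hxR := (hNsub B hB).1 hxB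
    rw [hRdef, Finset.mem_sdiff] at hxR
    exact hxR.2 (Finset.mem_biUnion.mpr ⟨A, hA, Finset.mem_inter.mpr ⟨hxA, hxR.1⟩⟩)
  have hMN : Disjoint M N := by
    rw [Finset.disjoint_left]
    intro A hA hAN
    have hd := hcross A hA A hAN
    have : A = ∅ := by simpa using disjoint_self.mp hd
    have hcA := hmem A hA
    rw [this] at hcA
    simp at hcA
    omega
  have hNF : ↑N ⊆ F := by
    intro A hA
    apply hclq
    rw [Finset.mem_powersetCard]
    exact ⟨((hNsub A hA).1).trans (by rw [hRdef]; exact Finset.sdiff_subset), (hNsub A hA).2⟩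
  have hunion : (M ∪ N).card ≤ s := by
    apply hmatch (M ∪ N) (Finset.union_subset hMF hNF)
    rw [Finset.coe_union]
    rw [Set.pairwiseDisjoint_union]
    refine ⟨hdisj, hNd, ?_⟩
    intro A hA B hB _
    exact hcross A hA B hB
  rw [Finset.card_union_of_disjoint hMN, hNc] at hunion
  omega

theorem stmt_6 (n k s r q l' : ℕ) (hq : q = s * k + r)
    (hr1 : 1 ≤ r) (hr2 : r ≤ k - 1)
    (F : Finset (Finset ℕ)) (hF : F ⊆ (Finset.Icc 1 n).powersetCard k)
    (hclq : (Finset.Icc 1 q).powersetCard k ⊆ F)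
    (hmatch : MatchingLE F s)
    (hl' : r + 1 ≤ l') (hl'k : l' ≤ k - 1) :
    ∀ M ⊆ F.filter (fun A => (A ∩ Finset.Icc 1 q).card = l'),
      (M : Set (Finset ℕ)).PairwiseDisjoint id →
        M.card * (k - l') ≤ k - r - 1 :=
  stmt6_aux n k s r q l' hq hr1 hr2 F hF hclq hmatch hl' hl'k
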